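/- Define M_n by M_0(x)=x+3 and M_n(x) = M_{n-1}(f(x))·((x+1)(x+3))^{3^{n-1}} with f(x)=(x^2-x+4)/(x+3), and T_n by T_0(z)=z+1, T_n(z)=(z+2)^{3^{n-1}}T_{n-1}(z^2+z). Then M_n(x) = 2^{(3^{n+1}+1)/2} · T_n(φ(x)) / φ(x)^{3^n}, where φ(x) = 4/(x-1). -/
import Mathlib


open Polynomial

noncomputable def fmap (x : ℂ) : ℂ := (x ^ 2 - x + 4) / (x + 3)

noncomputable def M : ℕ → ℂ → ℂ
  | 0 => fun x => x + 3
  | n + 1 => fun x => M n (fmap x) * ((x + 1) * (x + 3)) ^ (3 ^ n)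

noncomputable def T : ℕ → Polynomial ℤ
  | 0 => X + 1
  | n + 1 => (X + 2) ^ (3 ^ n) * (T n).comp (X ^ 2 + X)

noncomputable def φ (x : ℂ) : ℂ := 4 / (x - 1)

theorem stmt7 (n : ℕ) (x : ℂ) (hx : x ≠ 1)
    (horb : ∀ j < n, fmap^[j] x ≠ -3) :
    M n x = 2 ^ ((3 ^ (n + 1) + 1) / 2) *
      Polynomial.aeval (φ x) (T n) / (φ x) ^ (3 ^ n) := by
  induction n generalizing x with
  | zero =>
      have h1 : x - 1 ≠ 0 := sub_ne_zero.mpr hx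
      simp only [M, T, φ, map_add, aeval_X, map_one, pow_zero, pow_one]
      field_simp
      ring
  | succ n ih =>
      have hx1 : x - 1 ≠ 0 := sub_ne_zero.mpr hx
      have hx3 : x + 3 ≠ 0 := by
        intro h
        exact horb 0 (Nat.succ_pos n) (by simpa using eq_neg_of_add_eq_zero_left h)
      have hfx1 : fmap x ≠ 1 := by
        intro h
        rw [fmap, div_eq_one_iff_eq hx3] at h
        have : (x - 1) ^ 2 = 0 := by linear_combination h
        exact hx1 (pow_eq_zero_iff (by norm_num) |>.mp this)
      have horb' : ∀ j < n, fmap^[j] (fmap x) ≠ -3 := by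
        intro j hj
        have := horb (j + 1) (by omega)
        simpa [Function.iterate_succ_apply] using this
      set z := φ x with hzdef
      have hz : z ≠ 0 := by
        rw [hzdef, φ]
        exact div_ne_zero (by norm_num) hx1
      have hz1 : z + 1 ≠ 0 := by
        rw [hzdef, φ]
        intro h
        apply hx3
        field_simp at h
        linear_combination h
      have hd : fmap x - 1 = (x - 1) ^ 2 / (x + 3) := by
        rw [fmap]; field_simp; ring
      have hφf : φ (fmap x) = z ^ 2 + z := by
        rw [φ, hd, hzdef, φ]
        rw [div_div_eq_mul_div]
        field_simp
        ring
      have hT : (aeval z (T (n + 1)) : ℂ) =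
          (z + 2) ^ (3 ^ n) * aeval (z ^ 2 + z) (T n) := by
        simp [T, aeval_comp, map_ofNat]
      have he : (3 ^ (n + 1 + 1) + 1) / 2 = (3 ^ (n + 1) + 1) / 2 + 3 ^ (n + 1) := by
        obtain ⟨k, hk⟩ := Odd.pow (n := n + 1) (⟨1, by norm_num⟩ : Odd 3)
        have h2 : (3 : ℕ) ^ (n + 1 + 1) = 3 ^ (n + 1) * 3 := pow_succ 3 (n + 1)
        omega
      have hmain : (x + 1) * (x + 3) = 8 * (z + 2) * (z + 1) / z ^ 2 := by
        rw [hzdef, φ]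
        field_simp
        ring
      show M n (fmap x) * ((x + 1) * (x + 3)) ^ (3 ^ n) = _
      rw [ih (fmap x) hfx1 horb', hφf, hT, he, hmain, pow_add]
      have hzz : z ^ 2 + z = z * (z + 1) := by ring
      rw [hzz]
      simp only [pow_one]
      rw [pow_add (2 : ℂ),
        show (2 : ℂ) ^ (3 ^ n * 3) = 8 ^ (3 ^ n) from by rw [mul_comm, pow_mul]; norm_num,
        show (8 * (z + 2) * (z + 1) / z ^ 2) ^ (3 ^ n)
            = 8 ^ 3 ^ n * (z + 2) ^ 3 ^ n * (z + 1) ^ 3 ^ n / (z ^ 2) ^ 3 ^ n from by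
          rw [div_pow, mul_pow, mul_pow],
        mul_pow z (z + 1)]
      have hzk : z ^ 3 ^ n ≠ 0 := pow_ne_zero _ hz
      have hz1k : (z + 1) ^ 3 ^ n ≠ 0 := pow_ne_zero _ hz1
      have hz2k : (z ^ 2) ^ 3 ^ n ≠ 0 := pow_ne_zero _ (pow_ne_zero _ hz)
      field_simp
      ring
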